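/- Let X be a sum of n Bernoulli random variables X_1,...,X_n that are negatively associated, with P(X_i = 1) = p_i, and let μ ≥ E[X] = Σ p_i. Then for every t ≥ 0, P(X ≥ μ + t) ≤ exp(−μ·φ(t/μ)) where φ(x) = (1+x)log(1+x) − x. -/

import Mathlib

open MeasureTheory Finset
open scoped ENNReal

/-- Chernoff-type bound for sums of negatively associated Bernoulli random variables. -/
theorem neg_assoc_bernoulli_chernoff
    {Ω : Type*} [MeasurableSpace Ω] (μ : Measure Ω) [IsProbabilityMeasure μ]
    (n : ℕ) (X : Fin n → Ω → ℕ)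
    (hmeas : ∀ i, Measurable (X i))
    (hBer : ∀ i ω, X i ω ≤ 1)
    (hNA : ∀ s : Finset (Fin n),
      μ {ω | ∀ i ∈ s, X i ω = 1} ≤ ∏ i ∈ s, μ {ω | X i ω = 1})
    (μ0 t : ℝ)
    (hμ0 : (∑ i, (μ {ω | X i ω = 1}).toReal) ≤ μ0)
    (ht : 0 ≤ t) :
    (μ {ω | μ0 + t ≤ ∑ i, (X i ω : ℝ)}).toReal ≤
      Real.exp (-μ0 * ((1 + t / μ0) * Real.log (1 + t / μ0) - t / μ0)) := by
  have hμ0nonneg : 0 ≤ μ0 :=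
    le_trans (Finset.sum_nonneg fun i _ => ENNReal.toReal_nonneg) hμ0
  have hprob_le : ∀ s : Set Ω, (μ s).toReal ≤ 1 := by
    intro s
    have := ENNReal.toReal_mono ENNReal.one_ne_top (prob_le_one (μ := μ) (s := s))
    simpa using this
  rcases eq_or_lt_of_le hμ0nonneg with h0 | hμ0pos
  · rw [← h0]
    simp only [div_zero, neg_zero, zero_mul, Real.exp_zero]
    exact hprob_le _
  -- main case : 0 < μ0
  set c : ℝ := t / μ0 with hc_def
  have hc : 0 ≤ c := div_nonneg ht hμ0pos.le
  have h1c : (0:ℝ) < 1 + c := by linarith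
  set lam : ℝ := Real.log (1 + c) with hlam_def
  have hlam : 0 ≤ lam := Real.log_nonneg (by linarith)
  have hexp : Real.exp lam = 1 + c := Real.exp_log h1c
  set p : Fin n → ℝ≥0∞ := fun i => μ {ω | X i ω = 1} with hp
  set cE : ℝ≥0∞ := ENNReal.ofReal c with hcE
  set F : Ω → ℝ≥0∞ := fun ω => ∏ i, (cE * ((X i ω : ℕ) : ℝ≥0∞) + 1) with hF
  have hXmeas : ∀ i, Measurable fun ω => ((X i ω : ℕ) : ℝ≥0∞) :=
    fun i => measurable_from_nat.comp (hmeas i)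
  have hFmeas : Measurable F :=
    Finset.measurable_prod _ fun i _ => ((hXmeas i).const_mul cE).add_const 1
  set ε : ℝ≥0∞ := ENNReal.ofReal (Real.exp (lam * (μ0 + t))) with hε
  have hεpos : ε ≠ 0 := by
    simp [hε, ENNReal.ofReal_eq_zero, not_le, Real.exp_pos]
  have hεtop : ε ≠ ⊤ := ENNReal.ofReal_ne_top
  -- Pointwise identity for factors
  have hfac : ∀ i ω, ENNReal.ofReal (1 + c * (X i ω : ℝ)) = cE * ((X i ω : ℕ) : ℝ≥0∞) + 1 := by
    intro i ω
    rcases Nat.le_one_iff_eq_zero_or_eq_one.mp (hBer i ω) with h | h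
    · simp [h]
    · simp only [h, Nat.cast_one, mul_one]
      rw [ENNReal.ofReal_add zero_le_one hc, ENNReal.ofReal_one, add_comm]
  -- Event inclusion
  have hsub : {ω | μ0 + t ≤ ∑ i, (X i ω : ℝ)} ⊆ {ω | ε ≤ F ω} := by
    intro ω hω
    simp only [Set.mem_setOf_eq] at hω ⊢
    have key : Real.exp (lam * ∑ i, (X i ω : ℝ)) = ∏ i, (1 + c * (X i ω : ℝ)) := by
      rw [Finset.mul_sum, Real.exp_sum]
      refine Finset.prod_congr rfl fun i _ => ?_
      rcases Nat.le_one_iff_eq_zero_or_eq_one.mp (hBer i ω) with h | h <;>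
        simp [h, hexp]
    have h1 : Real.exp (lam * (μ0 + t)) ≤ ∏ i, (1 + c * (X i ω : ℝ)) := by
      rw [← key]
      exact Real.exp_le_exp.mpr (mul_le_mul_of_nonneg_left hω hlam)
    calc ε ≤ ENNReal.ofReal (∏ i, (1 + c * (X i ω : ℝ))) := ENNReal.ofReal_le_ofReal h1
      _ = F ω := by
          rw [ENNReal.ofReal_prod_of_nonneg (fun i _ => by positivity)]
          exact Finset.prod_congr rfl fun i _ => hfac i ω
  -- Markov inequality
  have markov : ε * μ {ω | ε ≤ F ω} ≤ ∫⁻ ω, F ω ∂μ :=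
    mul_meas_ge_le_lintegral₀ hFmeas.aemeasurable ε
  -- measurability of the "all ones" sets
  have hSet : ∀ s : Finset (Fin n), MeasurableSet {ω | ∀ i ∈ s, X i ω = 1} := by
    intro s
    have hrw : {ω | ∀ i ∈ s, X i ω = 1} = ⋂ i ∈ s, X i ⁻¹' {1} := by
      ext ω; simp
    rw [hrw]
    exact MeasurableSet.biInter s.countable_toSet
      fun i _ => (hmeas i) (measurableSet_singleton 1)
  -- products of X's are indicators
  have hprod_ind : ∀ (s : Finset (Fin n)) (ω : Ω),
      (∏ i ∈ s, ((X i ω : ℕ) : ℝ≥0∞)) =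
        Set.indicator {ω | ∀ i ∈ s, X i ω = 1} 1 ω := by
    intro s ω
    by_cases h : ∀ i ∈ s, X i ω = 1
    · rw [Set.indicator_of_mem (show ω ∈ {ω | ∀ i ∈ s, X i ω = 1} from h)]
      simp only [Pi.one_apply]
      refine Finset.prod_eq_one fun i hi => by rw [h i hi]; norm_num
    · rw [Set.indicator_of_notMem (show ω ∉ {ω | ∀ i ∈ s, X i ω = 1} from h)]
      push_neg at h
      obtain ⟨i, hi, hne⟩ := h
      have hz : X i ω = 0 := by
        have := hBer i ω; omega
      exact Finset.prod_eq_zero hi (by simp [hz])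
  -- bound the integral
  have hlin : ∫⁻ ω, F ω ∂μ ≤ ∏ i, (cE * p i + 1) := by
    have hexpand : ∀ ω, F ω = ∑ s ∈ (Finset.univ : Finset (Fin n)).powerset,
        cE ^ s.card * ∏ i ∈ s, ((X i ω : ℕ) : ℝ≥0∞) := by
      intro ω
      simp only [hF]
      rw [Finset.prod_add]
      refine Finset.sum_congr rfl fun s hs => ?_
      rw [Finset.prod_const_one, mul_one, Finset.prod_mul_distrib, Finset.prod_const]
    calc ∫⁻ ω, F ω ∂μ
        = ∑ s ∈ (Finset.univ : Finset (Fin n)).powerset,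
            cE ^ s.card * μ {ω | ∀ i ∈ s, X i ω = 1} := by
          simp only [hexpand]
          rw [lintegral_finset_sum _ (fun s _ =>
            (Finset.measurable_prod _ fun i _ => hXmeas i).const_mul _)]
          refine Finset.sum_congr rfl fun s _ => ?_
          rw [lintegral_const_mul _ (Finset.measurable_prod _ fun i _ => hXmeas i)]
          congr 1
          simp only [hprod_ind s]
          exact lintegral_indicator_one (hSet s)
      _ ≤ ∑ s ∈ (Finset.univ : Finset (Fin n)).powerset,
            cE ^ s.card * ∏ i ∈ s, p i :=
          Finset.sum_le_sum fun s _ => mul_le_mul_right (hNA s) _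
      _ = ∏ i, (cE * p i + 1) := by
          rw [Finset.prod_add]
          refine (Finset.sum_congr rfl fun s hs => ?_).symm
          rw [Finset.prod_const_one, mul_one, Finset.prod_mul_distrib, Finset.prod_const]
  -- finiteness
  have hPtop : (∏ i, (cE * p i + 1)) ≠ ⊤ := by
    refine (ENNReal.prod_lt_top fun i _ => ?_).ne
    exact ENNReal.add_lt_top.mpr
      ⟨(ENNReal.mul_ne_top ENNReal.ofReal_ne_top (measure_ne_top μ _)).lt_top,
       ENNReal.one_lt_top⟩
  -- combine into an ENNReal bound
  have hfinal : μ {ω | μ0 + t ≤ ∑ i, (X i ω : ℝ)} ≤ (∏ i, (cE * p i + 1)) / ε := by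
    rw [ENNReal.le_div_iff_mul_le (Or.inl hεpos) (Or.inl hεtop)]
    calc μ {ω | μ0 + t ≤ ∑ i, (X i ω : ℝ)} * ε
        = ε * μ {ω | μ0 + t ≤ ∑ i, (X i ω : ℝ)} := mul_comm _ _
      _ ≤ ε * μ {ω | ε ≤ F ω} := mul_le_mul_right (measure_mono hsub) ε
      _ ≤ ∫⁻ ω, F ω ∂μ := markov
      _ ≤ ∏ i, (cE * p i + 1) := hlin
  have hdivtop : (∏ i, (cE * p i + 1)) / ε ≠ ⊤ := by
    simp only [Ne, ENNReal.div_eq_top, not_or, not_and_or]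
    exact ⟨Or.inr hεpos, Or.inl hPtop⟩
  have hto : (μ {ω | μ0 + t ≤ ∑ i, (X i ω : ℝ)}).toReal ≤
      ((∏ i, (cE * p i + 1)) / ε).toReal := ENNReal.toReal_mono hdivtop hfinal
  rw [ENNReal.toReal_div] at hto
  have hεR : ε.toReal = Real.exp (lam * (μ0 + t)) :=
    ENNReal.toReal_ofReal (Real.exp_pos _).le
  have hPR : (∏ i, (cE * p i + 1)).toReal = ∏ i, (c * (p i).toReal + 1) := by
    rw [ENNReal.toReal_prod]
    refine Finset.prod_congr rfl fun i _ => ?_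
    rw [ENNReal.toReal_add (ENNReal.mul_ne_top ENNReal.ofReal_ne_top (measure_ne_top μ _))
      ENNReal.one_ne_top, ENNReal.toReal_mul, ENNReal.toReal_ofReal hc, ENNReal.toReal_one]
  rw [hεR, hPR] at hto
  refine hto.trans ?_
  rw [div_le_iff₀ (Real.exp_pos _), ← Real.exp_add]
  have hct : c * μ0 = t := div_mul_cancel₀ t hμ0pos.ne'
  calc ∏ i, (c * (p i).toReal + 1)
      ≤ ∏ i, Real.exp (c * (p i).toReal) :=
        Finset.prod_le_prod (fun i _ => by positivity) (fun i _ => Real.add_one_le_exp _)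
    _ = Real.exp (∑ i, c * (p i).toReal) := (Real.exp_sum _ _).symm
    _ = Real.exp (c * ∑ i, (p i).toReal) := by rw [Finset.mul_sum]
    _ ≤ Real.exp (c * μ0) := Real.exp_le_exp.mpr (mul_le_mul_of_nonneg_left hμ0 hc)
    _ = Real.exp (-μ0 * ((1 + c) * lam - c) + lam * (μ0 + t)) := by
        congr 1
        linear_combination lam * hct
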